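/- Let K be a compact metrizable topological group, let L be a closed subgroup of K, let μ be the pushforward to K/L of the Haar probability measure of K under the quotient map, and let G be a countable subgroup of K which, as a discrete group, admits an inner amenability sequence. Let G act on (K/L, μ) by left translation (a measure-preserving action). Then there exists a sequence (ξ_n) of nonnegative measurable functions on G × (K/L) with ‖ξ_n‖₁ = 1 for every n such that: (i) for every measurable A ⊆ K/L, ∑_{h∈G} ∫_X 1_A(p) 1_A(h·p) ξ_n(h, p) dμ(p) → μ(A); (ii) for every g ∈ G, ‖ξ_n^g − ξ_n‖₁ → 0; (iii) for every g ∈ G, ∫_{K/L} ξ_n(g, p) dμ(p) → 0; (iv) for every n and μ-almost every p ∈ K/L, ∑_{h∈G} ξ_n(h, p) = 1 and ∑_{h∈G} ξ_n(h, h⁻¹·p) = 1. (This is the concrete content of the corollary that the translation groupoid of the action of an inner amenable subgroup of a compact group on a homogeneous space is inner amenable.) -/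

import Mathlib

open Filter Topology MeasureTheory

/-- An inner amenability sequence for a countable discrete group `G`. -/
def InnerAmenabilitySeq {G : Type*} [Group G] (η : ℕ → G → ℝ) : Prop :=
  (∀ n g, 0 ≤ η n g) ∧
  (∀ n, HasSum (η n) 1) ∧
  (∀ g : G, Tendsto (fun n => ∑' h : G, |η n (g * h * g⁻¹) - η n h|) atTop (𝓝 0)) ∧
  (∀ g : G, Tendsto (fun n => η n g) atTop (𝓝 0))

set_option linter.unusedSectionVars false

set_option maxHeartbeats 1000000
section l1aux

variable {Γ : Type*} [Group Γ]

/-- "Convolution" `(ǎ * b)(g) = ∑_s a(s) b(s g)`. -/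
noncomputable def cnv (a b : Γ → ℝ) : Γ → ℝ := fun g => ∑' s, a s * b (s * g)

/-- Conjugation shift. -/
def cjf (u : Γ) (a : Γ → ℝ) : Γ → ℝ := fun h => a (u * h * u⁻¹)

/-- The shear equivalence `(s, g) ↦ (s, s * g)`. -/
def shearE (Γ : Type*) [Group Γ] : Γ × Γ ≃ Γ × Γ :=
  Equiv.prodShear (Equiv.refl Γ) fun s => Equiv.mulLeft s

@[simp] lemma shearE_apply (q : Γ × Γ) : shearE Γ q = (q.1, q.1 * q.2) := rfl

lemma summable_pair {a b : Γ → ℝ} (ha : ∀ g, 0 ≤ a g) (hb : ∀ g, 0 ≤ b g)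
    (hsa : Summable a) (hsb : Summable b) :
    Summable (fun q : Γ × Γ => a q.1 * b (q.1 * q.2)) := by
  have h0 : Summable (fun q : Γ × Γ => a q.1 * b q.2) := hsa.mul_of_nonneg hsb ha hb
  have := ((shearE Γ).summable_iff (f := fun q : Γ × Γ => a q.1 * b q.2)).2 h0
  exact this

lemma summable_cnv_fiber {a b : Γ → ℝ} (ha : ∀ g, 0 ≤ a g) (hb : ∀ g, 0 ≤ b g)
    (hsa : Summable a) (hsb : Summable b) (g : Γ) :
    Summable (fun s => a s * b (s * g)) := by
  have h := (summable_pair ha hb hsa hsb).comp_injective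
    (i := fun s : Γ => (s, g)) (fun s t hst => (Prod.mk.injEq _ _ _ _ ▸ hst).1)
  exact h

lemma cnv_nonneg {a b : Γ → ℝ} (ha : ∀ g, 0 ≤ a g) (hb : ∀ g, 0 ≤ b g) (g : Γ) :
    0 ≤ cnv a b g :=
  tsum_nonneg fun s => mul_nonneg (ha s) (hb _)

/-- Key summation lemma for `cnv`. -/
lemma hasSum_cnv {a b : Γ → ℝ} {α β : ℝ} (ha : ∀ g, 0 ≤ a g) (hb : ∀ g, 0 ≤ b g)
    (hA : HasSum a α) (hB : HasSum b β) : HasSum (cnv a b) (α * β) := by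
  have hsa : Summable a := hA.summable
  have hsb : Summable b := hB.summable
  -- the product function has sum α * β
  have hprod : HasSum (fun q : Γ × Γ => a q.1 * b q.2) (α * β) := by
    have h1 : Summable (fun q : Γ × Γ => a q.1 * b q.2) := hsa.mul_of_nonneg hsb ha hb
    have h2 : ∑' (q : Γ × Γ), a q.1 * b q.2 = α * β := by
      rw [Summable.tsum_prod' h1 fun s => (hsb.mul_left (a s))]
      calc ∑' s, ∑' t, a s * b t = ∑' s, a s * β := by
              refine tsum_congr fun s => ?_
              rw [tsum_mul_left, hB.tsum_eq]
           _ = α * β := by rw [tsum_mul_right, hA.tsum_eq]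
    exact h2 ▸ h1.hasSum
  have hsheared : HasSum (fun q : Γ × Γ => a q.1 * b (q.1 * q.2)) (α * β) :=
    ((shearE Γ).hasSum_iff (f := fun q : Γ × Γ => a q.1 * b q.2)).2 hprod
  have hswap : HasSum (fun q : Γ × Γ => a q.2 * b (q.2 * q.1)) (α * β) :=
    ((Equiv.prodComm Γ Γ).hasSum_iff (f := fun q : Γ × Γ => a q.1 * b (q.1 * q.2))).2 hsheared
  exact hswap.prod_fiberwise fun g =>
    (summable_cnv_fiber ha hb hsa hsb g).hasSum

lemma cnv_le_of_le {a b a' b' : Γ → ℝ} (ha : ∀ g, 0 ≤ a g) (hb : ∀ g, 0 ≤ b g)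
    (haa : ∀ g, a g ≤ a' g) (hbb : ∀ g, b g ≤ b' g)
    (hsa' : Summable a') (hsb' : Summable b') (g : Γ) :
    cnv a b g ≤ cnv a' b' g := by
  have ha' : ∀ g, 0 ≤ a' g := fun g => le_trans (ha g) (haa g)
  have hb' : ∀ g, 0 ≤ b' g := fun g => le_trans (hb g) (hbb g)
  have hsa : Summable a := hsa'.of_nonneg_of_le ha haa
  have hsb : Summable b := hsb'.of_nonneg_of_le hb hbb
  exact Summable.tsum_le_tsum
    (fun s => mul_le_mul (haa s) (hbb _) (hb _) (ha' s))
    (summable_cnv_fiber ha hb hsa hsb g) (summable_cnv_fiber ha' hb' hsa' hsb' g)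

/-- conjugation equivalence -/
def conjE (u : Γ) : Γ ≃ Γ :=
  ⟨fun h => u * h * u⁻¹, fun h => u⁻¹ * h * u, fun h => by group, fun h => by group⟩

lemma cjf_eq_comp (u : Γ) (a : Γ → ℝ) : cjf u a = a ∘ (conjE u) := rfl

lemma hasSum_cjf {a : Γ → ℝ} {α : ℝ} (u : Γ) (hA : HasSum a α) : HasSum (cjf u a) α :=
  ((conjE u).hasSum_iff (f := a)).2 hA

lemma summable_cjf {a : Γ → ℝ} (u : Γ) (hsa : Summable a) : Summable (cjf u a) :=
  (hasSum_cjf u hsa.hasSum).summable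

lemma tsum_cjf (u : Γ) (F : Γ → ℝ) : ∑' h, F (u * h * u⁻¹) = ∑' h, F h :=
  (conjE u).tsum_eq F

/-- conjugation commutes with convolution. -/
lemma cjf_cnv (u : Γ) (a b : Γ → ℝ) : cjf u (cnv a b) = cnv (cjf u a) (cjf u b) := by
  funext g
  refine Eq.symm ?_
  have : ∀ s : Γ, cjf u a s * cjf u b (s * g)
      = a (conjE u s) * b (conjE u s * (u * g * u⁻¹)) := by
    intro s
    simp only [cjf, conjE, Equiv.coe_fn_mk]
    congr 2
    group
  calc cnv (cjf u a) (cjf u b) g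
      = ∑' s, a (conjE u s) * b (conjE u s * (u * g * u⁻¹)) := tsum_congr this
    _ = ∑' s, a s * b (s * (u * g * u⁻¹)) :=
        (conjE u).tsum_eq (fun s => a s * b (s * (u * g * u⁻¹)))
    _ = cjf u (cnv a b) g := rfl

lemma summable_abs_sub {a b : Γ → ℝ} (ha : ∀ g, 0 ≤ a g) (hb : ∀ g, 0 ≤ b g)
    (hsa : Summable a) (hsb : Summable b) : Summable fun g => |a g - b g| :=
  (hsa.add hsb).of_nonneg_of_le (fun g => abs_nonneg _)
    (fun g => (abs_sub (a g) (b g)).trans (by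
      rw [abs_of_nonneg (ha g), abs_of_nonneg (hb g)]))

end l1aux

section l1aux2

variable {Γ : Type*} [Group Γ]

/-- Pointwise bound on the difference of two convolutions. -/
lemma abs_cnv_sub_le {a b a' b' : Γ → ℝ}
    (ha : ∀ g, 0 ≤ a g) (hb : ∀ g, 0 ≤ b g) (ha' : ∀ g, 0 ≤ a' g) (hb' : ∀ g, 0 ≤ b' g)
    (hsa : Summable a) (hsb : Summable b) (hsa' : Summable a') (hsb' : Summable b') (g : Γ) :
    |cnv a b g - cnv a' b' g| ≤
      cnv (fun s => |a s - a' s|) b g + cnv a' (fun s => |b s - b' s|) g := by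
  have habs : ∀ g, 0 ≤ |a g - a' g| := fun g => abs_nonneg _
  have hbabs : ∀ g, 0 ≤ |b g - b' g| := fun g => abs_nonneg _
  have hsabs : Summable (fun g => |a g - a' g|) := summable_abs_sub ha ha' hsa hsa'
  have hsbabs : Summable (fun g => |b g - b' g|) := summable_abs_sub hb hb' hsb hsb'
  have h1 : Summable (fun s => a s * b (s * g)) := summable_cnv_fiber ha hb hsa hsb g
  have h2 : Summable (fun s => a' s * b' (s * g)) := summable_cnv_fiber ha' hb' hsa' hsb' g
  have hdiff : cnv a b g - cnv a' b' g = ∑' s, (a s * b (s * g) - a' s * b' (s * g)) :=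
    (h1.hasSum.sub h2.hasSum).tsum_eq.symm
  rw [hdiff]
  have hbound : ∀ s, |a s * b (s * g) - a' s * b' (s * g)| ≤
      |a s - a' s| * b (s * g) + a' s * |b (s * g) - b' (s * g)| := by
    intro s
    have : a s * b (s * g) - a' s * b' (s * g)
        = (a s - a' s) * b (s * g) + a' s * (b (s * g) - b' (s * g)) := by ring
    rw [this]
    refine (abs_add_le _ _).trans ?_
    rw [abs_mul, abs_mul, abs_of_nonneg (hb (s * g)), abs_of_nonneg (ha' s)]
  have hsum1 : Summable (fun s => |a s - a' s| * b (s * g)) :=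
    summable_cnv_fiber habs hb hsabs hsb g
  have hsum2 : Summable (fun s => a' s * |b (s * g) - b' (s * g)|) := by
    have := (summable_pair ha' hbabs hsa' hsbabs).comp_injective
      (i := fun s : Γ => (s, g)) (fun s t hst => (Prod.mk.injEq _ _ _ _ ▸ hst).1)
    exact this
  calc |∑' s, (a s * b (s * g) - a' s * b' (s * g))|
      ≤ ∑' s, |a s * b (s * g) - a' s * b' (s * g)| := by
        simpa using norm_tsum_le_tsum_norm (f := fun s => a s * b (s * g) - a' s * b' (s * g))
          (by simpa using ((hsum1.add hsum2).of_nonneg_of_le (fun s => abs_nonneg _)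
            (fun s => hbound s)))
    _ ≤ ∑' s, (|a s - a' s| * b (s * g) + a' s * |b (s * g) - b' (s * g)|) :=
        Summable.tsum_le_tsum hbound
          ((hsum1.add hsum2).of_nonneg_of_le (fun s => abs_nonneg _) (fun s => hbound s))
          (hsum1.add hsum2)
    _ = _ := by
        rw [Summable.tsum_add hsum1 hsum2]; rfl

/-- ℓ¹ contraction property of convolution with respect to conjugation-type perturbations. -/
lemma tsum_abs_cnv_sub_le {a b a' b' : Γ → ℝ}
    (ha : ∀ g, 0 ≤ a g) (hb : ∀ g, 0 ≤ b g) (ha' : ∀ g, 0 ≤ a' g) (hb' : ∀ g, 0 ≤ b' g)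
    (hA : HasSum a 1) (hB : HasSum b 1) (hA' : HasSum a' 1) (hB' : HasSum b' 1) :
    ∑' g, |cnv a b g - cnv a' b' g| ≤ (∑' s, |a s - a' s|) + (∑' s, |b s - b' s|) := by
  have hsa := hA.summable; have hsb := hB.summable
  have hsa' := hA'.summable; have hsb' := hB'.summable
  have habs : ∀ g, 0 ≤ |a g - a' g| := fun g => abs_nonneg _
  have hbabs : ∀ g, 0 ≤ |b g - b' g| := fun g => abs_nonneg _
  have hsabs : Summable (fun g => |a g - a' g|) := summable_abs_sub ha ha' hsa hsa'
  have hsbabs : Summable (fun g => |b g - b' g|) := summable_abs_sub hb hb' hsb hsb'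
  -- the two majorant convolutions have explicit sums
  have hm1 : HasSum (cnv (fun s => |a s - a' s|) b) ((∑' s, |a s - a' s|) * 1) :=
    hasSum_cnv habs hb hsabs.hasSum hB
  have hm2 : HasSum (cnv a' (fun s => |b s - b' s|)) (1 * ∑' s, |b s - b' s|) :=
    hasSum_cnv ha' hbabs hA' hsbabs.hasSum
  have hmaj : Summable (fun g => cnv (fun s => |a s - a' s|) b g
      + cnv a' (fun s => |b s - b' s|) g) := hm1.summable.add hm2.summable
  have hpt : ∀ g, |cnv a b g - cnv a' b' g| ≤
      cnv (fun s => |a s - a' s|) b g + cnv a' (fun s => |b s - b' s|) g :=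
    fun g => abs_cnv_sub_le ha hb ha' hb' hsa hsb hsa' hsb' g
  calc ∑' g, |cnv a b g - cnv a' b' g|
      ≤ ∑' g, (cnv (fun s => |a s - a' s|) b g + cnv a' (fun s => |b s - b' s|) g) :=
        Summable.tsum_le_tsum hpt (hmaj.of_nonneg_of_le (fun g => abs_nonneg _) hpt) hmaj
    _ = (∑' s, |a s - a' s|) * 1 + 1 * ∑' s, |b s - b' s| := by
        rw [Summable.tsum_add hm1.summable hm2.summable, hm1.tsum_eq, hm2.tsum_eq]
    _ = _ := by ring

/-- Convolving with a sequence that goes pointwise to zero goes pointwise to zero. -/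
lemma cnv_tendsto_zero {a : Γ → ℝ} (ha : ∀ g, 0 ≤ a g) (hA : HasSum a 1)
    (b : ℕ → Γ → ℝ) (hb : ∀ m g, 0 ≤ b m g) (hB : ∀ m, HasSum (b m) 1)
    (hpt : ∀ g, Filter.Tendsto (fun m => b m g) Filter.atTop (nhds 0)) (g : Γ) :
    Filter.Tendsto (fun m => cnv a (b m) g) Filter.atTop (nhds 0) := by
  rw [Metric.tendsto_atTop]
  intro ε hε
  -- choose a finite set carrying most of the mass of `a`
  have hev : ∀ᶠ F in Filter.atTop, 1 - ε/2 < ∑ s ∈ F, a s := by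
    have := hA.eventually (lt_mem_nhds (show 1 - ε/2 < 1 by linarith))
    exact this
  obtain ⟨F, hF⟩ := hev.exists
  have htail : ∑' s : ↑(↑F : Set Γ)ᶜ, a ↑s < ε / 2 := by
    have h := Summable.sum_add_tsum_compl (s := F) hA.summable
    rw [hA.tsum_eq] at h
    linarith
  have hble : ∀ m s, b m s ≤ 1 := fun m s =>
    le_hasSum (hB m) s (fun j _ => hb m j)
  have hsplit : ∀ m, cnv a (b m) g = (∑ s ∈ F, a s * b m (s * g))
      + ∑' s : ↑(↑F : Set Γ)ᶜ, a ↑s * b m (↑s * g) := by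
    intro m
    exact (Summable.sum_add_tsum_compl (s := F)
      (summable_cnv_fiber ha (hb m) hA.summable (hB m).summable g)).symm
  have htail_m : ∀ m, ∑' s : ↑(↑F : Set Γ)ᶜ, a ↑s * b m (↑s * g) ≤ ε / 2 := by
    intro m
    refine le_trans (Summable.tsum_le_tsum (fun s => ?_)
      (((summable_cnv_fiber ha (hb m) hA.summable (hB m).summable g)).subtype _)
      (hA.summable.subtype _)) (le_of_lt htail)
    calc a ↑s * b m (↑s * g) ≤ a ↑s * 1 :=
          mul_le_mul_of_nonneg_left (hble m _) (ha _)
      _ = a ↑s := mul_one _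
  have hfin : Filter.Tendsto (fun m => ∑ s ∈ F, a s * b m (s * g)) Filter.atTop (nhds 0) := by
    have : Filter.Tendsto (fun m => ∑ s ∈ F, a s * b m (s * g)) Filter.atTop
        (nhds (∑ s ∈ F, (0:ℝ))) := by
      refine tendsto_finset_sum F fun s _ => ?_
      simpa using (hpt (s * g)).const_mul (a s)
    simpa using this
  have hev2 : ∀ᶠ m in Filter.atTop, ∑ s ∈ F, a s * b m (s * g) < ε / 2 :=
    hfin.eventually_lt_const (by linarith)
  obtain ⟨N, hN⟩ := Filter.eventually_atTop.1 hev2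
  refine ⟨N, fun m hm => ?_⟩
  have h1 : cnv a (b m) g < ε := by
    rw [hsplit m]
    have := hN m hm
    have := htail_m m
    linarith
  have h0 : 0 ≤ cnv a (b m) g := cnv_nonneg ha (hb m) g
  rw [Real.dist_eq]
  rw [abs_of_nonneg (by simpa using h0)]
  simpa using h1

end l1aux2

section stage

open Filter

variable {Γ : Type*} [Group Γ]

/-- Core construction: from an inner amenability sequence, given a conjugation-invariant
set `S` and a finite "partition" adapted to `S`, produce a single probability vector
supported in `S` with small conjugation defect and small atoms on a given finite set. -/
lemma stage_exists (η : ℕ → Γ → ℝ)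
    (hpos : ∀ n g, 0 ≤ η n g) (hsum : ∀ n, HasSum (η n) 1)
    (hconj : ∀ g : Γ, Tendsto (fun n => ∑' h, |η n (g * h * g⁻¹) - η n h|) atTop (𝓝 0))
    (hpt : ∀ g : Γ, Tendsto (fun n => η n g) atTop (𝓝 0))
    (S : Set Γ) (hSconj : ∀ u g, g ∈ S → u * g * u⁻¹ ∈ S)
    {ι : Type*} [Fintype ι] (pre : ι → Set Γ)
    (hcover : ∀ g, ∃ i, g ∈ pre i)
    (hdisj : ∀ g i j, g ∈ pre i → g ∈ pre j → i = j)
    (hpair : ∀ i s t, s ∈ pre i → t ∈ pre i → s⁻¹ * t ∈ S)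
    (F : Finset Γ) {ε : ℝ} (hε : 0 < ε) :
    ∃ σ : Γ → ℝ, (∀ g, 0 ≤ σ g) ∧ HasSum σ 1 ∧ (∀ g, g ∉ S → σ g = 0) ∧
      (∀ g ∈ F, ∑' h, |σ (g * h * g⁻¹) - σ h| ≤ ε) ∧ (∀ g ∈ F, σ g ≤ ε) := by
  classical
  haveI : Nonempty ι := ⟨(hcover 1).choose⟩
  -- masses of the pieces
  set v : ℕ → ι → ℝ := fun n i => ∑' g, (pre i).indicator (η n) g with hv
  have hind_nonneg : ∀ n i g, 0 ≤ (pre i).indicator (η n) g := fun n i g =>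
    Set.indicator_nonneg (fun t _ => hpos n t) g
  have hind_le : ∀ n i, (pre i).indicator (η n) ≤ η n := fun n i =>
    Set.indicator_le_self' (fun t _ => hpos n t)
  have hind_summable : ∀ n i, Summable ((pre i).indicator (η n)) := fun n i =>
    (hsum n).summable.of_nonneg_of_le (hind_nonneg n i) (hind_le n i)
  have hvsum : ∀ n, ∑ i : ι, v n i = 1 := by
    intro n
    have hsw : ∑' g, ∑ i : ι, (pre i).indicator (η n) g = ∑ i : ι, v n i :=
      Summable.tsum_finsetSum (fun i _ => hind_summable n i)
    have hpt' : ∀ g, ∑ i : ι, (pre i).indicator (η n) g = η n g := by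
      intro g
      obtain ⟨i₀, hi₀⟩ := hcover g
      rw [Finset.sum_eq_single i₀]
      · exact Set.indicator_of_mem hi₀ _
      · intro j _ hj
        refine Set.indicator_of_notMem (fun hmem => hj (hdisj g j i₀ hmem hi₀)) _
      · intro h; exact absurd (Finset.mem_univ i₀) h
    rw [← hsw, tsum_congr hpt', (hsum n).tsum_eq]
  -- pigeonhole: some piece carries mass at least 1/card
  set δ0 : ℝ := ((Fintype.card ι : ℝ))⁻¹ with hδ0
  have hcard_pos : (0:ℝ) < (Fintype.card ι : ℝ) := by
    have : 0 < Fintype.card ι := Fintype.card_pos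
    exact_mod_cast this
  have hδ0pos : 0 < δ0 := inv_pos.2 hcard_pos
  have hpigeon : ∀ n, ∃ i, δ0 ≤ v n i := by
    intro n
    by_contra hcon
    push_neg at hcon
    have : ∑ i : ι, v n i < ∑ _i : ι, δ0 :=
      Finset.sum_lt_sum_of_nonempty Finset.univ_nonempty (fun i _ => hcon i)
    rw [hvsum n, Finset.sum_const, Finset.card_univ, nsmul_eq_mul, hδ0] at this
    rw [mul_inv_cancel₀ (ne_of_gt hcard_pos)] at this
    exact lt_irrefl 1 this
  choose f hf using hpigeon
  obtain ⟨istar, hinf⟩ := Finite.exists_infinite_fiber f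
  have hMinf : (f ⁻¹' {istar}).Infinite := Set.infinite_coe_iff.1 hinf
  -- thresholds
  have hεn : 0 < ε * δ0 ^ 2 / 2 := by positivity
  have hev1 : ∀ᶠ n in atTop, ∀ g ∈ F, ∑' h, |η n (g * h * g⁻¹) - η n h| ≤ ε * δ0 ^ 2 / 2 := by
    rw [Filter.eventually_all_finset]
    intro g _
    exact ((hconj g).eventually_lt_const hεn).mono fun n hn => le_of_lt hn
  obtain ⟨N₁, hN₁⟩ := Filter.eventually_atTop.1 hev1
  obtain ⟨n, hnM, hnN⟩ := hMinf.exists_gt N₁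
  set a : Γ → ℝ := η n with ha_def
  have hev2 : ∀ᶠ m in atTop, ∀ g ∈ F, cnv a (η m) g ≤ ε * δ0 ^ 2 / 2 := by
    rw [Filter.eventually_all_finset]
    intro g _
    exact ((cnv_tendsto_zero (hpos n) (hsum n) η hpos hsum hpt g).eventually_lt_const
      hεn).mono fun m hm => le_of_lt hm
  obtain ⟨N₂, hN₂⟩ := Filter.eventually_atTop.1 hev2
  obtain ⟨m, hmM, hmN⟩ := hMinf.exists_gt (max n N₂)
  set b : Γ → ℝ := η m with hb_def
  set τ : Γ → ℝ := cnv a b with hτ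
  have hτ_nonneg : ∀ g, 0 ≤ τ g := cnv_nonneg (hpos n) (hpos m)
  have hτ_hasSum : HasSum τ 1 := by
    simpa using hasSum_cnv (hpos n) (hpos m) (hsum n) (hsum m)
  -- lower bound on the mass of `S.indicator τ`
  set T : Set Γ := pre istar with hT
  have hfa : f n = istar := hnM
  have hfb : f m = istar := hmM
  have hva : δ0 ≤ v n istar := hfa ▸ hf n
  have hvb : δ0 ≤ v m istar := hfb ▸ hf m
  set w : Γ → ℝ := cnv (T.indicator a) (T.indicator b) with hw
  have hw_hasSum : HasSum w (v n istar * v m istar) := by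
    refine hasSum_cnv (hind_nonneg n istar) (hind_nonneg m istar) ?_ ?_
    · exact (hind_summable n istar).hasSum
    · exact (hind_summable m istar).hasSum
  have hSind_summable : Summable (S.indicator τ) :=
    hτ_hasSum.summable.of_nonneg_of_le
      (fun g => Set.indicator_nonneg (fun t _ => hτ_nonneg t) g)
      (Set.indicator_le_self' (fun t _ => hτ_nonneg t))
  have hw_le : ∀ g, w g ≤ S.indicator τ g := by
    intro g
    by_cases hgS : g ∈ S
    · rw [Set.indicator_of_mem hgS]
      refine cnv_le_of_le (hind_nonneg n istar) (hind_nonneg m istar)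
        (hind_le n istar) (hind_le m istar) (hsum n).summable (hsum m).summable g
    · rw [Set.indicator_of_notMem hgS]
      have : ∀ s : Γ, T.indicator a s * T.indicator b (s * g) = 0 := by
        intro s
        by_cases hs : s ∈ T
        · by_cases hsg : s * g ∈ T
          · exact absurd (by simpa using hpair istar s (s * g) hs hsg) hgS
          · rw [Set.indicator_of_notMem hsg, mul_zero]
        · rw [Set.indicator_of_notMem hs, zero_mul]
      simp only [hw, cnv]
      rw [tsum_congr this, tsum_zero]
  set c : ℝ := ∑' g, S.indicator τ g with hc
  have hcge : v n istar * v m istar ≤ c := by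
    rw [hc, ← hw_hasSum.tsum_eq]
    exact Summable.tsum_le_tsum hw_le hw_hasSum.summable hSind_summable
  have hδ0sq : 0 < δ0 ^ 2 := by positivity
  have hcpos : 0 < c := lt_of_lt_of_le
    (lt_of_lt_of_le hδ0sq (by nlinarith)) hcge
  have hcinv_le : c⁻¹ ≤ (δ0 ^ 2)⁻¹ := by
    apply inv_anti₀ hδ0sq
    nlinarith
  -- the final vector
  refine ⟨fun g => c⁻¹ * S.indicator τ g, fun g => ?_, ?_, ?_, ?_, ?_⟩
  · exact mul_nonneg (le_of_lt (inv_pos.2 hcpos))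
      (Set.indicator_nonneg (fun t _ => hτ_nonneg t) g)
  · have := (hSind_summable.hasSum).mul_left c⁻¹
    rw [← hc, inv_mul_cancel₀ (ne_of_gt hcpos)] at this
    exact this
  · intro g hgS
    simp [Set.indicator_of_notMem hgS]
  · -- conjugation defect
    intro g hgF
    have hSiff : ∀ h, (g * h * g⁻¹ ∈ S) ↔ (h ∈ S) := by
      intro h
      constructor
      · intro hmem
        have := hSconj g⁻¹ _ hmem
        simpa [mul_assoc] using this
      · exact fun hmem => hSconj g h hmem
    have hptw : ∀ h, |(fun x => c⁻¹ * S.indicator τ x) (g * h * g⁻¹)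
        - (fun x => c⁻¹ * S.indicator τ x) h| ≤ c⁻¹ * |τ (g * h * g⁻¹) - τ h| := by
      intro h
      simp only []
      by_cases hhS : h ∈ S
      · rw [Set.indicator_of_mem hhS, Set.indicator_of_mem ((hSiff h).2 hhS)]
        rw [← mul_sub, abs_mul, abs_of_nonneg (le_of_lt (inv_pos.2 hcpos))]
      · rw [Set.indicator_of_notMem hhS,
          Set.indicator_of_notMem (fun hmem => hhS ((hSiff h).1 hmem)), mul_zero, sub_self,
          abs_zero]
        positivity
    have hτconj_summable : Summable (fun h => |τ (g * h * g⁻¹) - τ h|) :=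
      summable_abs_sub (fun h => hτ_nonneg _) hτ_nonneg
        (summable_cjf g hτ_hasSum.summable) hτ_hasSum.summable
    have hσ_summable : Summable (fun h => |(fun x => c⁻¹ * S.indicator τ x) (g * h * g⁻¹)
        - (fun x => c⁻¹ * S.indicator τ x) h|) := by
      refine (hτconj_summable.mul_left c⁻¹).of_nonneg_of_le (fun h => abs_nonneg _) hptw
    refine le_trans (Summable.tsum_le_tsum hptw hσ_summable (hτconj_summable.mul_left c⁻¹)) ?_
    rw [tsum_mul_left]
    -- bound ∑' |τ(ghg⁻¹) − τ h| using the convolution contraction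
    have hkey : ∑' h, |τ (g * h * g⁻¹) - τ h| ≤
        (∑' s, |η n (g * s * g⁻¹) - η n s|) + (∑' s, |η m (g * s * g⁻¹) - η m s|) := by
      have hc1 : ∀ h, τ (g * h * g⁻¹) = cnv (cjf g a) (cjf g b) h := by
        intro h
        have := congrFun (cjf_cnv g a b) h
        exact this
      calc ∑' h, |τ (g * h * g⁻¹) - τ h|
          = ∑' h, |cnv (cjf g a) (cjf g b) h - cnv a b h| := by
            refine tsum_congr fun h => ?_
            rw [← hc1 h]
        _ ≤ (∑' s, |cjf g a s - a s|) + (∑' s, |cjf g b s - b s|) :=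
            tsum_abs_cnv_sub_le (fun s => hpos n _) (fun s => hpos m _) (hpos n) (hpos m)
              (hasSum_cjf g (hsum n)) (hasSum_cjf g (hsum m)) (hsum n) (hsum m)
        _ = (∑' s, |η n (g * s * g⁻¹) - η n s|) + (∑' s, |η m (g * s * g⁻¹) - η m s|) := rfl
    have h1 : ∑' s, |η n (g * s * g⁻¹) - η n s| ≤ ε * δ0 ^ 2 / 2 :=
      hN₁ n (le_of_lt hnN) g hgF
    have h2 : ∑' s, |η m (g * s * g⁻¹) - η m s| ≤ ε * δ0 ^ 2 / 2 :=
      hN₁ m (le_of_lt (lt_trans hnN (lt_of_le_of_lt (le_max_left n N₂) hmN))) g hgF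
    have : c⁻¹ * ∑' h, |τ (g * h * g⁻¹) - τ h| ≤ (δ0 ^ 2)⁻¹ * (ε * δ0 ^ 2) := by
      refine mul_le_mul hcinv_le (by linarith) (tsum_nonneg fun h => abs_nonneg _)
        (le_of_lt (inv_pos.2 hδ0sq))
    refine le_trans this ?_
    rw [show (δ0 ^ 2)⁻¹ * (ε * δ0 ^ 2) = ε by
      field_simp]
  · -- small atoms
    intro g hgF
    have hτg : τ g ≤ ε * δ0 ^ 2 / 2 :=
      hN₂ m (le_trans (le_max_right n N₂) (le_of_lt hmN)) g hgF
    have hind : S.indicator τ g ≤ τ g := Set.indicator_le_self' (fun t _ => hτ_nonneg t) g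
    calc c⁻¹ * S.indicator τ g ≤ (δ0 ^ 2)⁻¹ * (ε * δ0 ^ 2 / 2) := by
          refine mul_le_mul hcinv_le (le_trans hind hτg)
            (Set.indicator_nonneg (fun t _ => hτ_nonneg t) g) (le_of_lt (inv_pos.2 hδ0sq))
      _ ≤ ε := by
          rw [show (δ0 ^ 2)⁻¹ * (ε * δ0 ^ 2 / 2) = ε / 2 by
            field_simp]
          linarith
end stage

section topo

open Filter

variable {K : Type*} [Group K] [TopologicalSpace K] [IsTopologicalGroup K] [CompactSpace K]

/-- Every neighborhood of `1` in a compact group contains a conjugation-invariant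
neighborhood of `1`. -/
lemma exists_conj_invariant_nhds {U : Set K} (hU : U ∈ 𝓝 (1:K)) :
    ∃ W ∈ 𝓝 (1:K), (∀ u k, k ∈ W → u * k * u⁻¹ ∈ W) ∧ W ⊆ U := by
  set O : Set K := interior U with hO
  have hO_open : IsOpen O := isOpen_interior
  have h1O : (1:K) ∈ O := mem_interior_iff_mem_nhds.2 hU
  set n : Set (K × K) := (fun q : K × K => q.1 * q.2 * q.1⁻¹) ⁻¹' O with hn
  have hn_open : IsOpen n := (by fun_prop : Continuous fun q : K × K => q.1 * q.2 * q.1⁻¹).isOpen_preimage O hO_open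
  have hsub : (Set.univ : Set K) ×ˢ ({1} : Set K) ⊆ n := by
    rintro ⟨c, k⟩ ⟨-, hk⟩
    simp only [Set.mem_singleton_iff] at hk
    subst hk
    simpa [hn] using h1O
  obtain ⟨u, v, hu_open, hv_open, huK, h1v, huv⟩ :=
    generalized_tube_lemma isCompact_univ isCompact_singleton hn_open hsub
  set W : Set K := {k | ∀ c : K, c * k * c⁻¹ ∈ O} with hW
  have hvW : v ⊆ W := by
    intro k hk c
    exact huv (Set.mk_mem_prod (huK (Set.mem_univ c)) hk)
  refine ⟨W, mem_of_superset (hv_open.mem_nhds (h1v rfl)) hvW, ?_, ?_⟩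
  · intro u' k hk c
    have := hk (c * u')
    simpa [mul_assoc] using this
  · intro k hk
    have := hk 1
    simpa using interior_subset this

/-- A finite Borel-free partition of a compact group into sets of "diameter" inside `W`. -/
lemma exists_partition_small {W : Set K} (hW : W ∈ 𝓝 (1:K)) :
    ∃ (ι : Type) (_ : Fintype ι) (P : ι → Set K),
      (∀ x, ∃ i, x ∈ P i) ∧ (∀ x i j, x ∈ P i → x ∈ P j → i = j) ∧
      (∀ i x y, x ∈ P i → y ∈ P i → x⁻¹ * y ∈ W) := by
  classical
  obtain ⟨V, hV, hVsplit⟩ := exists_nhds_split_inv hW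
  set O : Set K := interior V with hO
  have hO_open : IsOpen O := isOpen_interior
  have h1O : (1:K) ∈ O := mem_interior_iff_mem_nhds.2 hV
  -- cover by left translates of O⁻¹
  set Uc : K → Set K := fun z => (fun x => z⁻¹ * x) ⁻¹' O⁻¹ with hUc
  have hUc_open : ∀ z, IsOpen (Uc z) := fun z =>
    (continuous_const.mul continuous_id).isOpen_preimage _ hO_open.inv
  have hUc_mem : ∀ x, x ∈ Uc x := by
    intro x
    simp [hUc, Set.mem_inv, h1O]
  have hcov : (Set.univ : Set K) ⊆ ⋃ z : K, Uc z := fun x _ =>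
    Set.mem_iUnion.2 ⟨x, hUc_mem x⟩
  obtain ⟨t, ht⟩ := isCompact_univ.elim_finite_subcover Uc hUc_open hcov
  -- disjointify, using an enumeration of t
  haveI : Nonempty K := ⟨1⟩
  set κ := {z // z ∈ t}
  haveI : Fintype κ := FinsetCoe.fintype t
  set nκ := Fintype.card κ with hnκ
  set eF : κ ≃ Fin nκ := Fintype.equivFin κ with heF
  refine ⟨ULift (Fin nκ), inferInstance, fun i => Uc (eF.symm i.down).val \
      ⋃ (j : Fin nκ) (_ : j < i.down), Uc (eF.symm j).val, ?_, ?_, ?_⟩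
  · -- cover
    intro x
    have hx : x ∈ ⋃ z ∈ t, Uc z := ht (Set.mem_univ x)
    rw [Set.mem_iUnion₂] at hx
    obtain ⟨z, hzt, hxz⟩ := hx
    -- the set of indices whose piece contains x
    set s : Finset (Fin nκ) := Finset.univ.filter (fun i => x ∈ Uc (eF.symm i).val) with hs
    have hsne : s.Nonempty := ⟨eF ⟨z, hzt⟩, by simp [hs, hxz]⟩
    obtain ⟨i₀, hi₀s, hi₀min⟩ := Finset.exists_min_image s id hsne
    refine ⟨⟨i₀⟩, ?_, ?_⟩
    · simpa [hs] using (Finset.mem_filter.1 hi₀s).2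
    · intro hmem
      rw [Set.mem_iUnion] at hmem
      obtain ⟨j, hj⟩ := hmem
      rw [Set.mem_iUnion] at hj
      obtain ⟨hjlt, hxj⟩ := hj
      have : i₀ ≤ j := hi₀min j (by simp [hs, hxj])
      exact absurd hjlt (not_lt.2 this)
  · -- uniqueness
    rintro x ⟨i⟩ ⟨j⟩ ⟨hxi, hni⟩ ⟨hxj, hnj⟩
    rcases lt_trichotomy i j with h | h | h
    · exact absurd (Set.mem_iUnion.2 ⟨i, Set.mem_iUnion.2 ⟨h, hxi⟩⟩) hnj
    · simp [h]
    · exact absurd (Set.mem_iUnion.2 ⟨j, Set.mem_iUnion.2 ⟨h, hxj⟩⟩) hni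
  · -- pair property
    rintro ⟨i⟩ x y ⟨hxi, -⟩ ⟨hyi, -⟩
    set z := (eF.symm i).val with hz
    have hx : x⁻¹ * z ∈ O := by simpa [hUc, Set.mem_preimage, Set.mem_inv, mul_inv_rev, inv_inv] using hxi
    have hy : y⁻¹ * z ∈ O := by simpa [hUc, Set.mem_preimage, Set.mem_inv, mul_inv_rev, inv_inv] using hyi
    have := hVsplit _ (interior_subset hx) _ (interior_subset hy)
    have heq : (x⁻¹ * z) / (y⁻¹ * z) = x⁻¹ * y := by
      rw [div_eq_mul_inv, mul_inv_rev, inv_inv, mul_assoc, ← mul_assoc z, mul_inv_cancel, one_mul]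
    rwa [heq] at this

end topo

section L1cont

open Filter

lemma integrable_of_bdd {X : Type*} [MeasurableSpace X] {μ : MeasureTheory.Measure X}
    [MeasureTheory.IsFiniteMeasure μ] {f : X → ℝ} (hf : Measurable f) {C : ℝ}
    (hC : ∀ x, |f x| ≤ C) : MeasureTheory.Integrable f μ :=
  (MeasureTheory.integrable_const C).mono' hf.aestronglyMeasurable
    (Filter.Eventually.of_forall hC)

variable {K : Type*} [Group K] [TopologicalSpace K] [IsTopologicalGroup K] [CompactSpace K]
  [TopologicalSpace.MetrizableSpace K] [MeasurableSpace K] [BorelSpace K]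

/-- Continuity of translation in `L¹` for indicator functions, on a compact metrizable
group with a Haar probability measure. -/
lemma exists_nhds_translate_L1_le (ν : MeasureTheory.Measure K) [ν.IsHaarMeasure]
    [MeasureTheory.IsProbabilityMeasure ν] {B : Set K} (hB : MeasurableSet B)
    {δ : ℝ} (hδ : 0 < δ) :
    ∃ U ∈ 𝓝 (1:K), ∀ k ∈ U,
      ∫ x, |B.indicator (fun _ => (1:ℝ)) (k * x) - B.indicator (fun _ => (1:ℝ)) x| ∂ν ≤ δ := by
  haveI : NormalSpace K := by
    letI := TopologicalSpace.metrizableSpaceMetric K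
    infer_instance
  set f : K → ℝ := B.indicator (fun _ => (1:ℝ)) with hf
  have hf_meas : Measurable f := measurable_const.indicator hB
  have hf_bdd : ∀ x, |f x| ≤ 1 := by
    intro x
    by_cases hx : x ∈ B <;> simp [hf, Set.indicator_of_mem, Set.indicator_of_notMem, hx]
  have hf_int : MeasureTheory.Integrable f ν := integrable_of_bdd hf_meas hf_bdd
  have hδ4 : 0 < δ / 4 := by linarith
  obtain ⟨g, hg_close, hg_int⟩ := hf_int.exists_boundedContinuous_integral_sub_le hδ4
  -- uniform continuity of g via the tube lemma
  have hcont : Continuous fun q : K × K => |g (q.1 * q.2) - g q.2| := by fun_prop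
  have hopen : IsOpen {q : K × K | |g (q.1 * q.2) - g q.2| < δ / 4} :=
    isOpen_lt hcont continuous_const
  have hsub : ({(1:K)} : Set K) ×ˢ (Set.univ : Set K)
      ⊆ {q : K × K | |g (q.1 * q.2) - g q.2| < δ / 4} := by
    rintro ⟨k, x⟩ ⟨hk, -⟩
    simp only [Set.mem_singleton_iff] at hk
    subst hk
    simpa using hδ4
  obtain ⟨u, v, hu_open, hv_open, h1u, hvK, huv⟩ :=
    generalized_tube_lemma isCompact_singleton isCompact_univ hopen hsub
  refine ⟨u, hu_open.mem_nhds (h1u rfl), fun k hk => ?_⟩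
  have hg_unif : ∀ x : K, |g (k * x) - g x| ≤ δ / 4 := fun x =>
    le_of_lt (huv (Set.mk_mem_prod hk (hvK (Set.mem_univ x))))
  -- integrability of all the pieces
  have hg_meas : Measurable (g : K → ℝ) := g.continuous.measurable
  have hg_bdd : ∀ x : K, |(g : K → ℝ) x| ≤ ‖g‖ := fun x => g.norm_coe_le_norm x
  have i1 : MeasureTheory.Integrable (fun x => |f (k * x) - g (k * x)|) ν := by
    refine integrable_of_bdd ((hf_meas.comp (measurable_const_mul k)).sub
      (hg_meas.comp (measurable_const_mul k))).abs (C := 1 + ‖g‖) fun x => ?_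
    rw [abs_abs]
    refine (abs_sub _ _).trans ?_
    exact add_le_add (hf_bdd _) (hg_bdd _)
  have i2 : MeasureTheory.Integrable (fun x => |g (k * x) - g x|) ν := by
    refine integrable_of_bdd ((hg_meas.comp (measurable_const_mul k)).sub hg_meas).abs
      (C := ‖g‖ + ‖g‖) fun x => ?_
    rw [abs_abs]
    exact (abs_sub _ _).trans (add_le_add (hg_bdd _) (hg_bdd _))
  have i3 : MeasureTheory.Integrable (fun x => |g x - f x|) ν := by
    refine integrable_of_bdd (hg_meas.sub hf_meas).abs (C := ‖g‖ + 1) fun x => ?_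
    rw [abs_abs]
    exact (abs_sub _ _).trans (add_le_add (hg_bdd _) (hf_bdd _))
  have i0 : MeasureTheory.Integrable (fun x => |f (k * x) - f x|) ν := by
    refine integrable_of_bdd ((hf_meas.comp (measurable_const_mul k)).sub hf_meas).abs
      (C := 1 + 1) fun x => ?_
    rw [abs_abs]
    exact (abs_sub _ _).trans (add_le_add (hf_bdd _) (hf_bdd _))
  -- the pointwise triangle inequality
  have hptw : ∀ x, |f (k * x) - f x| ≤
      |f (k * x) - g (k * x)| + (|g (k * x) - g x| + |g x - f x|) := by
    intro x
    calc |f (k * x) - f x|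
        = |(f (k * x) - g (k * x)) + ((g (k * x) - g x) + (g x - f x))| := by ring_nf
      _ ≤ |f (k * x) - g (k * x)| + |(g (k * x) - g x) + (g x - f x)| := abs_add_le _ _
      _ ≤ |f (k * x) - g (k * x)| + (|g (k * x) - g x| + |g x - f x|) := by
          have := abs_add_le (g (k * x) - g x) (g x - f x)
          linarith
  have hstep : ∫ x, |f (k * x) - f x| ∂ν ≤
      ∫ x, (|f (k * x) - g (k * x)| + (|g (k * x) - g x| + |g x - f x|)) ∂ν :=
    MeasureTheory.integral_mono i0 (i1.add (i2.add i3)) hptw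
  have i23 : MeasureTheory.Integrable (fun x => |g (k * x) - g x| + |g x - f x|) ν := i2.add i3
  rw [MeasureTheory.integral_add i1 i23, MeasureTheory.integral_add i2 i3] at hstep
  -- evaluate / bound the three pieces
  have e1 : ∫ x, |f (k * x) - g (k * x)| ∂ν = ∫ x, |f x - g x| ∂ν :=
    MeasureTheory.integral_mul_left_eq_self (fun x => |f x - g x|) k
  have e1' : ∫ x, |f x - g x| ∂ν ≤ δ / 4 := by
    have : (fun x => |f x - g x|) = fun x => ‖f x - g x‖ := by
      funext x; rw [Real.norm_eq_abs]
    rw [this]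
    exact hg_close
  have e2 : ∫ x, |g (k * x) - g x| ∂ν ≤ δ / 4 := by
    have : ∫ x, |g (k * x) - g x| ∂ν ≤ ∫ _x, δ / 4 ∂ν :=
      MeasureTheory.integral_mono i2 (MeasureTheory.integrable_const _) hg_unif
    simpa using this
  have e3 : ∫ x, |g x - f x| ∂ν ≤ δ / 4 := by
    have : (fun x => |g x - f x|) = fun x => ‖f x - g x‖ := by
      funext x; rw [Real.norm_eq_abs, abs_sub_comm]
    rw [this]
    exact hg_close
  rw [e1] at hstep
  linarith

end L1cont


/-- Let `K` be a compact metrizable topological group, `L ≤ K` a closed subgroup, `μ` the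
pushforward to `K ⧸ L` of the Haar probability measure of `K`, and `G ≤ K` a countable
subgroup admitting an inner amenability sequence as a discrete group.  Let `G` act on
`(K ⧸ L, μ)` by left translation.  Then there is a sequence `(ξ n)` of nonnegative
measurable functions on `G × (K ⧸ L)` of total mass `1` which is balanced (i), asymptotically
conjugation-invariant (ii), diffuse (iii), and fiberwise of mass one (iv), i.e. the
translation groupoid `G ⋉ (K ⧸ L, μ)` is inner amenable. -/
theorem innerAmenable_translation_groupoid_of_compact_homogeneous_space
    {K : Type*} [Group K] [TopologicalSpace K] [IsTopologicalGroup K]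
    [CompactSpace K] [TopologicalSpace.MetrizableSpace K]
    [MeasurableSpace K] [BorelSpace K]
    (ν : Measure K) [ν.IsHaarMeasure] [IsProbabilityMeasure ν]
    (L : Subgroup K) (hL : IsClosed (L : Set K))
    (G : Subgroup K) [Countable G]
    (η : ℕ → G → ℝ) (hη : InnerAmenabilitySeq η)
    (μ : Measure (K ⧸ L)) (hμ : μ = Measure.map (QuotientGroup.mk : K → K ⧸ L) ν) :
    ∃ ξ : ℕ → G → (K ⧸ L) → ℝ,
      (∀ n g, Measurable (ξ n g)) ∧
      (∀ n g p, 0 ≤ ξ n g p) ∧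
      (∀ n, ∑' g : G, ∫ p, ξ n g p ∂μ = 1) ∧
      -- (i) balanced
      (∀ A : Set (K ⧸ L), MeasurableSet A →
        Tendsto
          (fun n => ∑' g : G,
            ∫ p, A.indicator (fun _ => (1 : ℝ)) p *
              A.indicator (fun _ => (1 : ℝ)) ((g : K) • p) * ξ n g p ∂μ)
          atTop (𝓝 (μ A).toReal)) ∧
      -- (ii) asymptotically conjugation-invariant
      (∀ g : G,
        Tendsto
          (fun n => ∑' h : G, ∫ p, |ξ n (g * h * g⁻¹) ((g : K) • p) - ξ n h p| ∂μ)
          atTop (𝓝 0)) ∧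
      -- (iii) diffuse
      (∀ g : G, Tendsto (fun n => ∫ p, ξ n g p ∂μ) atTop (𝓝 0)) ∧
      -- (iv) fiberwise mass one
      (∀ n, ∀ᵐ p ∂μ,
        HasSum (fun g : G => ξ n g p) 1 ∧ HasSum (fun g : G => ξ n g ((g : K)⁻¹ • p)) 1) := by
  classical
  obtain ⟨hpos, hsum2, hconj, hpt⟩ := hη
  have hmk : Measurable (QuotientGroup.mk : K → K ⧸ L) :=
    @measurable_quotient_mk'' K _ (QuotientGroup.leftRel L)
  haveI : IsProbabilityMeasure μ := by
    rw [hμ]; exact Measure.isProbabilityMeasure_map hmk.aemeasurable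
  have hsmulMeas : ∀ k : K, Measurable (fun p : K ⧸ L => k • p) := by
    intro k
    rw [@measurable_from_quotient K (K ⧸ L) _ _ (QuotientGroup.leftRel L)]
    have : ((fun p : K ⧸ L => k • p) ∘ Quotient.mk'')
        = (QuotientGroup.mk : K → K ⧸ L) ∘ (fun x => k * x) := rfl
    rw [this]
    exact hmk.comp (measurable_const_mul k)
  -- integrals of constants
  have hInt_const : ∀ c : ℝ, ∫ (_ : K ⧸ L), c ∂μ = c := by
    intro c; simp
  -- translation continuity in L¹ on the quotient
  have lemT : ∀ (A : Set (K ⧸ L)), MeasurableSet A → ∀ δ : ℝ, 0 < δ →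
      ∃ U ∈ 𝓝 (1:K), ∀ k ∈ U,
        ∫ p, |A.indicator (fun _ => (1:ℝ)) (k • p) - A.indicator (fun _ => (1:ℝ)) p| ∂μ ≤ δ := by
    intro A hA δ hδ
    set B := (QuotientGroup.mk : K → K ⧸ L) ⁻¹' A with hB_def
    have hB : MeasurableSet B := hmk hA
    obtain ⟨U, hU, hUle⟩ := exists_nhds_translate_L1_le ν hB hδ
    refine ⟨U, hU, fun k hk => ?_⟩
    have hmeasInt : Measurable fun p : K ⧸ L =>
        |A.indicator (fun _ => (1:ℝ)) (k • p) - A.indicator (fun _ => (1:ℝ)) p| :=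
      (((measurable_const.indicator hA).comp (hsmulMeas k)).sub
        (measurable_const.indicator hA)).abs
    rw [hμ, MeasureTheory.integral_map hmk.aemeasurable hmeasInt.aestronglyMeasurable]
    have hptw : ∀ x : K,
        |A.indicator (fun _ => (1:ℝ)) (k • (QuotientGroup.mk x : K ⧸ L))
          - A.indicator (fun _ => (1:ℝ)) (QuotientGroup.mk x)|
        = |B.indicator (fun _ => (1:ℝ)) (k * x) - B.indicator (fun _ => (1:ℝ)) x| := by
      intro x
      have h1 : A.indicator (fun _ => (1:ℝ)) (k • (QuotientGroup.mk x : K ⧸ L))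
          = B.indicator (fun _ => (1:ℝ)) (k * x) := by
        have hq : (k • (QuotientGroup.mk x : K ⧸ L)) = QuotientGroup.mk (k * x) := rfl
        rw [hq]
        by_cases hmem : (QuotientGroup.mk (k * x) : K ⧸ L) ∈ A
        · rw [Set.indicator_of_mem hmem, Set.indicator_of_mem (show k * x ∈ B from hmem)]
        · rw [Set.indicator_of_notMem hmem,
            Set.indicator_of_notMem (show k * x ∉ B from hmem)]
      have h2 : A.indicator (fun _ => (1:ℝ)) (QuotientGroup.mk x : K ⧸ L)
          = B.indicator (fun _ => (1:ℝ)) x := by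
        by_cases hmem : (QuotientGroup.mk x : K ⧸ L) ∈ A
        · rw [Set.indicator_of_mem hmem, Set.indicator_of_mem (show x ∈ B from hmem)]
        · rw [Set.indicator_of_notMem hmem, Set.indicator_of_notMem (show x ∉ B from hmem)]
      rw [h1, h2]
    calc ∫ x, |A.indicator (fun _ => (1:ℝ)) (k • (QuotientGroup.mk x : K ⧸ L))
            - A.indicator (fun _ => (1:ℝ)) (QuotientGroup.mk x)| ∂ν
        = ∫ x, |B.indicator (fun _ => (1:ℝ)) (k * x) - B.indicator (fun _ => (1:ℝ)) x| ∂ν :=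
          integral_congr_ae (Filter.Eventually.of_forall hptw)
      _ ≤ δ := hUle k hk
  -- a countable antitone basis of neighborhoods of 1 in K
  obtain ⟨U, hUb⟩ := (𝓝 (1:K)).exists_antitone_basis
  have hUmem : ∀ j : ℕ, U j ∈ 𝓝 (1:K) := fun j => hUb.mem j
  have hUconv : ∀ V ∈ 𝓝 (1:K), ∃ J : ℕ, ∀ j ≥ J, U j ⊆ V := by
    intro V hV
    obtain ⟨J, -, hJ⟩ := hUb.toHasBasis.mem_iff.1 hV
    exact ⟨J, fun j hj => (hUb.antitone hj).trans hJ⟩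
  -- conjugation invariant neighborhoods inside the basis
  have hWex : ∀ j : ℕ, ∃ W ∈ 𝓝 (1:K), (∀ u k, k ∈ W → u * k * u⁻¹ ∈ W) ∧ W ⊆ U j :=
    fun j => exists_conj_invariant_nhds (hUmem j)
  choose W hWmem hWconj hWsub using hWex
  -- partitions adapted to the W j
  have hPex : ∀ j : ℕ, ∃ (ι : Type) (_ : Fintype ι) (P : ι → Set K),
      (∀ x, ∃ i, x ∈ P i) ∧ (∀ x i j', x ∈ P i → x ∈ P j' → i = j') ∧
      (∀ i x y, x ∈ P i → y ∈ P i → x⁻¹ * y ∈ W j) :=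
    fun j => exists_partition_small (hWmem j)
  choose ι ifin P hPcov hPdisj hPpair using hPex
  -- enumeration of G
  obtain ⟨e, he⟩ := exists_surjective_nat ↥G
  -- stage construction
  have hstage : ∀ j : ℕ, ∃ σ : ↥G → ℝ, (∀ g, 0 ≤ σ g) ∧ HasSum σ 1 ∧
      (∀ g : ↥G, g ∉ {g : ↥G | (g : K) ∈ W j} → σ g = 0) ∧
      (∀ g ∈ (Finset.range (j+1)).image e, ∑' h, |σ (g * h * g⁻¹) - σ h| ≤ 1/((j:ℝ)+1)) ∧
      (∀ g ∈ (Finset.range (j+1)).image e, σ g ≤ 1/((j:ℝ)+1)) := by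
    intro j
    haveI := ifin j
    refine stage_exists η hpos hsum2 hconj hpt
      {g : ↥G | (g : K) ∈ W j} ?_ (fun i => (fun g : ↥G => (g : K)) ⁻¹' P j i)
      ?_ ?_ ?_ ((Finset.range (j+1)).image e) (ε := 1/((j:ℝ)+1)) (by positivity)
    · intro u g hg
      have : ((u * g * u⁻¹ : ↥G) : K) = (u:K) * (g:K) * (u:K)⁻¹ := by push_cast; ring_nf
      simpa [Set.mem_setOf_eq, this] using hWconj j (u:K) (g:K) hg
    · intro g
      exact hPcov j (g : K)
    · intro g i i' hgi hgi'
      exact hPdisj j (g : K) i i' hgi hgi'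
    · intro i s t hs ht
      have : ((s⁻¹ * t : ↥G) : K) = ((s:K))⁻¹ * (t:K) := by push_cast; ring_nf
      simpa [Set.mem_setOf_eq, this] using hPpair j i (s:K) (t:K) hs ht
  choose σ hσ0 hσ1 hσsupp hσconj hσatom using hstage
  have hσsummable : ∀ j, Summable (σ j) := fun j => (hσ1 j).summable
  have hmem_e : ∀ (g : ↥G), ∃ jg : ℕ, ∀ j ≥ jg, g ∈ (Finset.range (j+1)).image e := by
    intro g
    obtain ⟨jg, hjg⟩ := he g
    exact ⟨jg, fun j hj => Finset.mem_image.2 ⟨jg, Finset.mem_range.2 (by omega), hjg⟩⟩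
  have hbound0 : Tendsto (fun j : ℕ => 1/((j:ℝ)+1)) atTop (𝓝 0) :=
    tendsto_one_div_add_atTop_nhds_zero_nat
  refine ⟨fun j g _ => σ j g, fun j g => measurable_const, fun j g p => hσ0 j g, ?_, ?_, ?_, ?_, ?_⟩
  · -- total mass 1
    intro n
    calc ∑' g : ↥G, ∫ (_ : K ⧸ L), σ n g ∂μ = ∑' g : ↥G, σ n g := by
          refine tsum_congr fun g => hInt_const (σ n g)
      _ = 1 := (hσ1 n).tsum_eq
  · -- (i) balanced
    intro A hA
    set indA := A.indicator (fun _ => (1:ℝ)) with hindA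
    have hindA_meas : Measurable indA := measurable_const.indicator hA
    have hindA01 : ∀ p, 0 ≤ indA p ∧ indA p ≤ 1 := by
      intro p
      by_cases hp : p ∈ A <;>
        simp [hindA, Set.indicator_of_mem, Set.indicator_of_notMem, hp]
    set c : ℝ := (μ A).toReal with hc
    set I : ↥G → ℝ := fun g => ∫ p, indA p * indA ((g:K) • p) ∂μ with hI
    have hprod_meas : ∀ g : ↥G, Measurable fun p => indA p * indA ((g:K) • p) := fun g =>
      hindA_meas.mul (hindA_meas.comp (hsmulMeas (g:K)))
    have hprod_bdd : ∀ (g : ↥G) p, |indA p * indA ((g:K) • p)| ≤ 1 := by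
      intro g p
      rw [abs_mul]
      have h1 := hindA01 p
      have h2 := hindA01 ((g:K) • p)
      rw [abs_of_nonneg h1.1, abs_of_nonneg h2.1]
      calc indA p * indA ((g:K) • p) ≤ 1 * 1 :=
            mul_le_mul h1.2 h2.2 h2.1 (by norm_num)
        _ = 1 := by norm_num
    have hprod_int : ∀ g : ↥G, Integrable (fun p => indA p * indA ((g:K) • p)) μ :=
      fun g => integrable_of_bdd (hprod_meas g) (hprod_bdd g)
    have hindA_int : Integrable indA μ :=
      integrable_of_bdd hindA_meas (fun p => by
        rw [abs_of_nonneg (hindA01 p).1]; exact (hindA01 p).2)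
    have hc_eq : ∫ p, indA p ∂μ = c := by
      rw [hindA, hc, integral_indicator_const (1:ℝ) hA]
      simp [Measure.real]
    have hc01 : 0 ≤ c ∧ c ≤ 1 := by
      constructor
      · rw [← hc_eq]; exact integral_nonneg fun p => (hindA01 p).1
      · rw [← hc_eq]
        calc ∫ p, indA p ∂μ ≤ ∫ (_ : K ⧸ L), (1:ℝ) ∂μ :=
              integral_mono hindA_int (integrable_const 1) (fun p => (hindA01 p).2)
          _ = 1 := hInt_const 1
    have hI01 : ∀ g, 0 ≤ I g ∧ I g ≤ 1 := by
      intro g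
      constructor
      · exact integral_nonneg fun p => mul_nonneg (hindA01 p).1 (hindA01 _).1
      · calc I g ≤ ∫ (_ : K ⧸ L), (1:ℝ) ∂μ :=
            integral_mono (hprod_int g) (integrable_const 1)
              (fun p => (abs_le.1 (hprod_bdd g p)).2)
          _ = 1 := hInt_const 1
    have hIc2 : ∀ g, |I g - c| ≤ 2 := by
      intro g
      have h1 := hI01 g
      have := hc01
      rw [abs_le]
      constructor <;> linarith [h1.1, h1.2, this.1, this.2]
    -- |I g − c| is controlled by the L¹ translation distance
    have hIc : ∀ g : ↥G, |I g - c| ≤ ∫ p, |indA ((g:K) • p) - indA p| ∂μ := by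
      intro g
      have habs_int : Integrable (fun p => |indA ((g:K) • p) - indA p|) μ := by
        refine integrable_of_bdd ((hindA_meas.comp (hsmulMeas (g:K))).sub hindA_meas).abs
          (C := 2) fun p => ?_
        rw [abs_abs]
        refine (abs_sub _ _).trans ?_
        have h1 := hindA01 ((g:K) • p); have h2 := hindA01 p
        rw [abs_of_nonneg h1.1, abs_of_nonneg h2.1]; linarith [h1.2, h2.2]
      have hsub_eq : I g - c = ∫ p, (indA p * indA ((g:K) • p) - indA p) ∂μ := by
        rw [integral_sub (hprod_int g) hindA_int, hc_eq]
      rw [hsub_eq]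
      have hnorm : |∫ p, (indA p * indA ((g:K) • p) - indA p) ∂μ|
          ≤ ∫ p, |indA p * indA ((g:K) • p) - indA p| ∂μ := by
        simpa [Real.norm_eq_abs] using
          norm_integral_le_integral_norm (fun p => indA p * indA ((g:K) • p) - indA p) (μ := μ)
      refine hnorm.trans ?_
      refine integral_mono ?_ habs_int ?_
      · refine integrable_of_bdd ((hprod_meas g).sub hindA_meas).abs (C := 2) fun p => ?_
        rw [abs_abs]
        refine (abs_sub _ _).trans ?_
        have h2 := hindA01 p
        rw [abs_of_nonneg h2.1]
        linarith [hprod_bdd g p, abs_nonneg (indA p * indA ((g:K) • p)),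
          (abs_le.1 (hprod_bdd g p)).2, h2.2]
      · intro p
        show |indA p * indA ((g:K) • p) - indA p| ≤ |indA ((g:K) • p) - indA p|
        by_cases hp : p ∈ A
        · have h1 : indA p = 1 := Set.indicator_of_mem hp _
          rw [h1, one_mul]
        · have h1 : indA p = 0 := Set.indicator_of_notMem hp _
          rw [h1, zero_mul, sub_self, abs_zero]
          exact abs_nonneg _
    -- rewrite the terms of the sequence
    have hterm : ∀ j : ℕ, (∑' g : ↥G, ∫ p, indA p * indA ((g:K) • p) * σ j g ∂μ)
        = ∑' g : ↥G, I g * σ j g := by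
      intro j
      refine tsum_congr fun g => ?_
      rw [hI]
      exact integral_mul_const (σ j g) (fun p => indA p * indA ((g:K) • p))
    -- summability facts
    have hsIσ : ∀ j, Summable fun g => I g * σ j g := by
      intro j
      refine (hσsummable j).of_nonneg_of_le
        (fun g => mul_nonneg (hI01 g).1 (hσ0 j g)) (fun g => ?_)
      calc I g * σ j g ≤ 1 * σ j g :=
            mul_le_mul_of_nonneg_right (hI01 g).2 (hσ0 j g)
        _ = σ j g := one_mul _
    have hsIcσ : ∀ j, Summable fun g => |I g - c| * σ j g := by
      intro j
      refine ((hσsummable j).mul_left 2).of_nonneg_of_le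
        (fun g => mul_nonneg (abs_nonneg _) (hσ0 j g)) (fun g => ?_)
      exact mul_le_mul_of_nonneg_right (hIc2 g) (hσ0 j g)
    have hdiff_eq : ∀ j, (∑' g : ↥G, I g * σ j g) - c = ∑' g : ↥G, (I g - c) * σ j g := by
      intro j
      have h1 : Summable fun g => c * σ j g := (hσsummable j).mul_left c
      have h2 : ∑' g : ↥G, c * σ j g = c := by
        rw [tsum_mul_left, (hσ1 j).tsum_eq, mul_one]
      have h3 : ∑' g : ↥G, (I g - c) * σ j g
          = (∑' g : ↥G, I g * σ j g) - ∑' g : ↥G, c * σ j g := by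
        rw [← Summable.tsum_sub (hsIσ j) h1]
        exact tsum_congr fun g => by ring
      rw [h3, h2]
    rw [Metric.tendsto_atTop]
    intro ε hε
    obtain ⟨V, hV, hVle⟩ := lemT A hA (ε/2) (by linarith)
    obtain ⟨J, hJ⟩ := hUconv V hV
    refine ⟨J, fun j hj => ?_⟩
    have hWV : W j ⊆ V := (hWsub j).trans (hJ j hj)
    have hptbound : ∀ g : ↥G, |I g - c| * σ j g ≤ (ε/2) * σ j g := by
      intro g
      by_cases hgz : σ j g = 0
      · rw [hgz, mul_zero, mul_zero]
      · have hgW : (g:K) ∈ W j := by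
          by_contra hgW
          exact hgz (hσsupp j g hgW)
        have hΔ : ∫ p, |indA ((g:K) • p) - indA p| ∂μ ≤ ε/2 := hVle (g:K) (hWV hgW)
        exact mul_le_mul_of_nonneg_right ((hIc g).trans hΔ) (hσ0 j g)
    have habs : |(∑' g : ↥G, I g * σ j g) - c| ≤ ε/2 := by
      rw [hdiff_eq j]
      have h1 : |∑' g : ↥G, (I g - c) * σ j g| ≤ ∑' g : ↥G, |I g - c| * σ j g := by
        have heq : (fun g : ↥G => |(I g - c) * σ j g|) = fun g => |I g - c| * σ j g := by
          funext g
          rw [abs_mul, abs_of_nonneg (hσ0 j g)]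
        have hs : Summable fun g : ↥G => |(I g - c) * σ j g| := by
          rw [heq]; exact hsIcσ j
        have h := norm_tsum_le_tsum_norm (f := fun g : ↥G => (I g - c) * σ j g)
          (by simp only [Real.norm_eq_abs]; exact hs)
        simp only [Real.norm_eq_abs] at h
        rw [heq] at h
        exact h
      refine h1.trans ?_
      calc ∑' g : ↥G, |I g - c| * σ j g ≤ ∑' g : ↥G, (ε/2) * σ j g :=
            Summable.tsum_le_tsum hptbound (hsIcσ j) ((hσsummable j).mul_left _)
        _ = ε/2 := by rw [tsum_mul_left, (hσ1 j).tsum_eq, mul_one]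
    rw [Real.dist_eq, hterm j]
    calc |(∑' g : ↥G, I g * σ j g) - c| ≤ ε/2 := habs
      _ < ε := by linarith
  · -- (ii) conjugation invariance
    intro g
    obtain ⟨jg, hjg⟩ := hmem_e g
    have hre : ∀ n, (∑' h : ↥G, ∫ (_ : K ⧸ L), |σ n (g * h * g⁻¹) - σ n h| ∂μ)
        = ∑' h : ↥G, |σ n (g * h * g⁻¹) - σ n h| := by
      intro n
      exact tsum_congr fun h => hInt_const _
    refine squeeze_zero' (Filter.Eventually.of_forall fun n => ?_) ?_ hbound0
    · rw [hre n]
      exact tsum_nonneg fun h => abs_nonneg _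
    · filter_upwards [Filter.eventually_ge_atTop jg] with n hn
      rw [hre n]
      exact hσconj n g (hjg n hn)
  · -- (iii) diffuse
    intro g
    obtain ⟨jg, hjg⟩ := hmem_e g
    refine squeeze_zero' (Filter.Eventually.of_forall fun n => ?_) ?_ hbound0
    · rw [hInt_const]
      exact hσ0 n g
    · filter_upwards [Filter.eventually_ge_atTop jg] with n hn
      rw [hInt_const]
      exact hσatom n g (hjg n hn)
  · -- (iv) fiberwise mass one
    intro n
    exact Filter.Eventually.of_forall fun p => ⟨hσ1 n, hσ1 n⟩
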